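/- Let B be a real tensor of order m and dimension n and let 𝓘 be the identity tensor of order m and dimension n. Then B is a strong P tensor if and only if {𝓘, B} is a strong P tensor pair. -/
import Mathlib


open Finset

/-- A real tensor of order `m` and dimension `n`, indexed by a first index in `Fin n`
and `m - 1` further indices in `Fin n`. -/
abbrev Tensor (m n : ℕ) : Type := Fin n → (Fin (m - 1) → Fin n) → ℝ

/-- `tApp A x` is the vector `A x^{m-1}` with `i`-th component
`∑_{i₂,…,i_m} a_{i i₂ … i_m} x_{i₂} ⋯ x_{i_m}`. -/
noncomputable def tApp {m n : ℕ} (A : Tensor m n) (x : Fin n → ℝ) : Fin n → ℝ :=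
  fun i => ∑ j : Fin (m - 1) → Fin n, A i j * ∏ k, x (j k)

/-- The identity tensor: entries `1` when all indices coincide, `0` otherwise,
so that `tApp (idT m n) x = x^{[m-1]}`. -/
def idT (m n : ℕ) : Tensor m n :=
  fun i j => if (∀ k, j k = i) then 1 else 0

/-- The solution set of the horizontal tensor complementarity problem HTCP(A,B,q). -/
def SOL {m n : ℕ} (A B : Tensor m n) (q : Fin n → ℝ) :
    Set ((Fin n → ℝ) × (Fin n → ℝ)) :=
  {p | p.1 ⊓ p.2 = 0 ∧ tApp A p.1 - tApp B p.2 = q}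

/-- `{A,B}` is an R0 tensor pair. -/
def R0Pair {m n : ℕ} (A B : Tensor m n) : Prop :=
  ∀ x y : Fin n → ℝ, x ⊓ y = 0 → tApp A x - tApp B y = 0 → x = 0 ∧ y = 0

/-- `{A,B}` is a P tensor pair. -/
def PPair {m n : ℕ} (A B : Tensor m n) : Prop :=
  ∀ x y : Fin n → ℝ, x * y ≤ 0 → tApp A x - tApp B y = 0 → x = 0 ∧ y = 0

/-- `{A,B}` is a strong P tensor pair. -/
def StrongPPair {m n : ℕ} (A B : Tensor m n) : Prop :=
  ∀ x1 x2 y1 y2 : Fin n → ℝ,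
    (x1 - x2) * (y1 - y2) ≤ 0 →
    (tApp A x1 - tApp A x2) - (tApp B y1 - tApp B y2) = 0 →
    x1 = x2 ∧ y1 = y2

/-- `B` is a strong P tensor. -/
def StrongPTensor {m n : ℕ} (B : Tensor m n) : Prop :=
  ∀ x1 x2 : Fin n → ℝ, (x1 - x2) * (tApp B x1 - tApp B x2) ≤ 0 → x1 = x2


lemma tApp_idT' {m n : ℕ} (x : Fin n → ℝ) (i : Fin n) :
    tApp (idT m n) x i = x i ^ (m - 1) := by
  unfold tApp idT
  rw [Finset.sum_eq_single (fun _ => i)]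
  · rw [if_pos (fun k => rfl), one_mul, Finset.prod_const, Finset.card_univ,
      Fintype.card_fin]
  · intro j _ hj
    rw [if_neg, zero_mul]
    intro h; exact hj (funext h)
  · intro h; exact absurd (Finset.mem_univ _) h

lemma pow_root (k : ℕ) (hk : Odd k) (c : ℝ) : ∃ u : ℝ, u ^ k = c := by
  rcases le_or_gt 0 c with hc | hc
  · exact ⟨c ^ (k⁻¹ : ℝ), Real.rpow_inv_natCast_pow hc (by rintro rfl; simp at hk)⟩
  · refine ⟨-((-c) ^ (k⁻¹ : ℝ)), ?_⟩
    rw [hk.neg_pow, Real.rpow_inv_natCast_pow (by linarith) (by rintro rfl; simp at hk),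
      neg_neg]

lemma tApp_neg_even {m n : ℕ} (hk : Even (m - 1)) (B : Tensor m n) (x : Fin n → ℝ) :
    tApp B (-x) = tApp B x := by
  funext i
  unfold tApp
  refine Finset.sum_congr rfl fun j _ => ?_
  congr 1
  have : ∏ kk, (-x) (j kk) = (-1 : ℝ) ^ (m - 1) * ∏ kk, x (j kk) := by
    calc ∏ kk, (-x) (j kk) = ∏ kk, (-1 : ℝ) * x (j kk) := by
          simp [neg_one_mul]
      _ = (∏ _kk : Fin (m-1), (-1 : ℝ)) * ∏ kk, x (j kk) := Finset.prod_mul_distrib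
      _ = (-1 : ℝ) ^ (m - 1) * ∏ kk, x (j kk) := by
          rw [Finset.prod_const, Finset.card_univ, Fintype.card_fin]
  rw [this, hk.neg_one_pow, one_mul]

/-- `B` is a strong P tensor iff `{𝓘, B}` is a strong P tensor pair. -/
theorem strongPTensor_iff_strongPPair_id (m n : ℕ) (hm : 2 ≤ m) (hn : 1 ≤ n)
    (B : Tensor m n) : StrongPTensor B ↔ StrongPPair (idT m n) B := by
  set k := m - 1 with hkdef
  have hk1 : 1 ≤ k := by omega
  rcases Nat.even_or_odd k with hke | hko
  · -- even case: both sides are false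
    have hkne : Even (m - 1) := hke
    set o : Fin n → ℝ := fun _ => 1 with ho
    have hi0 : (⟨0, hn⟩ : Fin n) = ⟨0, hn⟩ := rfl
    constructor
    · intro h
      exfalso
      have heq : o = -o := by
        apply h o (-o)
        rw [tApp_neg_even hkne, sub_self, mul_zero]
      have := congrFun heq ⟨0, hn⟩
      simp [ho] at this
      linarith
    · intro h
      exfalso
      have heq : o = -o := by
        refine (h o (-o) 0 0 (by rw [sub_self, mul_zero]) ?_).1
        funext i
        simp only [Pi.sub_apply, Pi.zero_apply]
        rw [tApp_idT', tApp_idT', Pi.neg_apply, hkne.neg_pow]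
        ring
      have := congrFun heq ⟨0, hn⟩
      simp [ho] at this
      linarith
  · -- odd case
    constructor
    · intro h x1 x2 y1 y2 hxy heq
      have hc : ∀ i, x1 i ^ k - x2 i ^ k = tApp B y1 i - tApp B y2 i := by
        intro i
        have := congrFun heq i
        simp only [Pi.sub_apply, Pi.zero_apply] at this
        rw [tApp_idT', tApp_idT'] at this
        linarith
      have hy : y1 = y2 := by
        apply h
        intro i
        have hde := hxy i
        simp only [Pi.mul_apply, Pi.sub_apply, Pi.zero_apply] at hde ⊢
        rw [← hc i]
        rcases lt_trichotomy (x1 i) (x2 i) with hlt | heq' | hlt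
        · have hpow : x1 i ^ k < x2 i ^ k := hko.strictMono_pow hlt
          nlinarith
        · rw [heq']; ring_nf; rfl
        · have hpow : x2 i ^ k < x1 i ^ k := hko.strictMono_pow hlt
          nlinarith
      refine ⟨?_, hy⟩
      funext i
      have := hc i
      rw [hy, sub_self] at this
      exact hko.strictMono_pow.injective (by linarith : x1 i ^ k = x2 i ^ k)
    · intro h x1 x2 hx
      choose u hu using fun i => pow_root k hko (tApp B x1 i - tApp B x2 i)
      refine (h u 0 x1 x2 ?_ ?_).2
      · intro i
        have hde := hx i
        simp only [Pi.mul_apply, Pi.sub_apply, Pi.zero_apply] at hde ⊢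
        rcases lt_trichotomy (x1 i) (x2 i) with hlt | heq' | hlt
        · have hc : 0 ≤ tApp B x1 i - tApp B x2 i := by nlinarith
          have hun : 0 ≤ u i := hko.pow_nonneg_iff.mp (by rw [hu i]; exact hc)
          nlinarith
        · rw [heq']; ring_nf; rfl
        · have hc : tApp B x1 i - tApp B x2 i ≤ 0 := by nlinarith
          have hun : u i ≤ 0 := hko.pow_nonpos_iff.mp (by rw [hu i]; exact hc)
          nlinarith
      · funext i
        simp only [Pi.sub_apply, Pi.zero_apply]
        rw [tApp_idT', tApp_idT', hu i, Pi.zero_apply, zero_pow (by omega)]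
        ring
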